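/- Suppose the complex-valued functions n, m, l, j on {|s| ≤ t < T} satisfy the two algebraic relations c₁[l - (i/2)g₀m] + (π/4)𝒜⁻¹n = 0 and c₁[j + (i/2)ḡ₀l + ((i/8)|g₀|²ḡ₀ + (1/4)ḡ₁)n] + (π/4)𝒜⁻¹m + (πi/8)ḡ₀𝒜⁻¹n = 0 (all evaluated at (t,s)), together with the ODE system n_t - n_s = 2iΔ₂n + α₁m + 2g₀j and m_t + m_s = α₂n + ᾱ₁l, where α₁ = (1/2)(|g₀|²g₀ + 2ig₁) and α₂ = (1/4)(|g₀|⁴ḡ₀ + iḡ₀²g₁ - 2iḡ_{0t}) and Δ₂ = (3/4)|g₀|⁴ - (i/2)(ḡ₁g₀ - ḡ₀g₁) is real. Then n and m satisfy the closed system n_t - n_s = β₁n + β₂m + β₃𝒜⁻¹m and m_t + m_s = β₄m + β₅n + β₆𝒜⁻¹n, with β₁ = (5i/4)|g₀|⁴ + (1/2)g₀ḡ₁ - ḡ₀g₁, β₂ = |g₀|²g₀ + ig₁, β₃ = -πg₀/(2c₁), β₄ = (1/4)(i|g₀|⁴ + 2g₀ḡ₁), β₅ = (1/4)(|g₀|⁴ḡ₀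 + iḡ₀²g₁ - 2iḡ_{0t}), β₆ = -(π/(8c₁))(|g₀|²ḡ₀ - 2iḡ₁). -/

import Mathlib

open Complex

/-- The constant `c₁ = √π e^{-iπ/4}/(2√2)`. -/
noncomputable def c1 : ℂ :=
  (Real.sqrt Real.pi : ℂ) * Complex.exp (-(Real.pi : ℂ) * Complex.I / 4) /
    (2 * (Real.sqrt 2 : ℂ))


lemma c1_ne_zero : c1 ≠ 0 := by
  unfold c1
  apply div_ne_zero
  · apply mul_ne_zero
    · exact_mod_cast Real.sqrt_ne_zero'.mpr Real.pi_pos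
    · exact Complex.exp_ne_zero _
  · norm_num

/-- Algebraic elimination of `l` and `j` from the global-relation identities and the
GLM ODEs, yielding the closed system for `n` and `m` (theorem 3 of the paper).
`An` and `Am` denote `𝒜⁻¹n` and `𝒜⁻¹m`. -/
theorem glm_elimination (T : ℝ) (g0 g1 : ℝ → ℂ) (n m l j An Am : ℝ → ℝ → ℂ)
    -- `c₁[l - (i/2)g₀m] + (π/4)𝒜⁻¹n = 0`
    (h1 : ∀ t s : ℝ, |s| ≤ t → t < T →
      c1 * (l t s - (Complex.I / 2) * g0 t * m t s) + (Real.pi / 4 : ℂ) * An t s = 0)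
    -- `c₁[j + (i/2)ḡ₀l + ((i/8)|g₀|²ḡ₀ + (1/4)ḡ₁)n] + (π/4)𝒜⁻¹m + (πi/8)ḡ₀𝒜⁻¹n = 0`
    (h2 : ∀ t s : ℝ, |s| ≤ t → t < T →
      c1 * (j t s + (Complex.I / 2) * (starRingEnd ℂ) (g0 t) * l t s +
          ((Complex.I / 8) * (g0 t * (starRingEnd ℂ) (g0 t)) * (starRingEnd ℂ) (g0 t) +
            (1 / 4 : ℂ) * (starRingEnd ℂ) (g1 t)) * n t s) +
        (Real.pi / 4 : ℂ) * Am t s +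
        (Real.pi * Complex.I / 8 : ℂ) * (starRingEnd ℂ) (g0 t) * An t s = 0)
    -- `n_t - n_s = 2iΔ₂n + α₁m + 2g₀j`, with
    -- `Δ₂ = (3/4)|g₀|⁴ - (i/2)(ḡ₁g₀ - ḡ₀g₁)` and `α₁ = (1/2)(|g₀|²g₀ + 2ig₁)`
    (hn : ∀ t s : ℝ, |s| ≤ t → t < T →
      deriv (fun τ => n τ s) t - deriv (fun σ => n t σ) s =
        2 * Complex.I *
          ((3 / 4 : ℂ) * (g0 t * (starRingEnd ℂ) (g0 t)) ^ 2 -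
            (Complex.I / 2) * ((starRingEnd ℂ) (g1 t) * g0 t -
              (starRingEnd ℂ) (g0 t) * g1 t)) * n t s +
        (1 / 2 : ℂ) * (g0 t * (starRingEnd ℂ) (g0 t) * g0 t + 2 * Complex.I * g1 t) *
          m t s +
        2 * g0 t * j t s)
    -- `m_t + m_s = α₂n + ᾱ₁l`, with `α₂ = (1/4)(|g₀|⁴ḡ₀ + iḡ₀²g₁ - 2iḡ_{0t})`
    (hm : ∀ t s : ℝ, |s| ≤ t → t < T →
      deriv (fun τ => m τ s) t + deriv (fun σ => m t σ) s =
        (1 / 4 : ℂ) * ((g0 t * (starRingEnd ℂ) (g0 t)) ^ 2 * (starRingEnd ℂ) (g0 t) +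
            Complex.I * ((starRingEnd ℂ) (g0 t)) ^ 2 * g1 t -
            2 * Complex.I * (starRingEnd ℂ) (deriv g0 t)) * n t s +
        (starRingEnd ℂ)
          ((1 / 2 : ℂ) * (g0 t * (starRingEnd ℂ) (g0 t) * g0 t + 2 * Complex.I * g1 t)) *
          l t s) :
    ∀ t s : ℝ, |s| ≤ t → t < T →
      -- `n_t - n_s = β₁n + β₂m + β₃𝒜⁻¹m`
      (deriv (fun τ => n τ s) t - deriv (fun σ => n t σ) s =
        ((5 * Complex.I / 4) * (g0 t * (starRingEnd ℂ) (g0 t)) ^ 2 +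
          (1 / 2 : ℂ) * g0 t * (starRingEnd ℂ) (g1 t) -
          (starRingEnd ℂ) (g0 t) * g1 t) * n t s +
        (g0 t * (starRingEnd ℂ) (g0 t) * g0 t + Complex.I * g1 t) * m t s +
        (-(Real.pi : ℂ) * g0 t / (2 * c1)) * Am t s) ∧
      -- `m_t + m_s = β₄m + β₅n + β₆𝒜⁻¹n`
      (deriv (fun τ => m τ s) t + deriv (fun σ => m t σ) s =
        (1 / 4 : ℂ) * (Complex.I * (g0 t * (starRingEnd ℂ) (g0 t)) ^ 2 +
          2 * g0 t * (starRingEnd ℂ) (g1 t)) * m t s +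
        (1 / 4 : ℂ) * ((g0 t * (starRingEnd ℂ) (g0 t)) ^ 2 * (starRingEnd ℂ) (g0 t) +
          Complex.I * ((starRingEnd ℂ) (g0 t)) ^ 2 * g1 t -
          2 * Complex.I * (starRingEnd ℂ) (deriv g0 t)) * n t s +
        (-(Real.pi / (8 * c1)) * (g0 t * (starRingEnd ℂ) (g0 t) * (starRingEnd ℂ) (g0 t) -
          2 * Complex.I * (starRingEnd ℂ) (g1 t))) * An t s) := by
  intro t s hs ht
  have hc : c1 ≠ 0 := c1_ne_zero
  have hl : l t s = Complex.I / 2 * g0 t * m t s - (Real.pi : ℂ) / (4 * c1) * An t s := by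
    have h := h1 t s hs ht
    field_simp
    linear_combination 8 * h
  have hj : j t s = -(Complex.I / 2) * (starRingEnd ℂ) (g0 t) * l t s -
      ((Complex.I / 8) * (g0 t * (starRingEnd ℂ) (g0 t)) * (starRingEnd ℂ) (g0 t) +
        (1 / 4 : ℂ) * (starRingEnd ℂ) (g1 t)) * n t s -
      (Real.pi : ℂ) / (4 * c1) * Am t s -
      (Real.pi : ℂ) * Complex.I / (8 * c1) * (starRingEnd ℂ) (g0 t) * An t s := by
    have h := h2 t s hs ht
    field_simp
    linear_combination 64 * h
  have e1 := hn t s hs ht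
  have e2 := hm t s hs ht
  simp only [map_mul, map_add, map_one, map_div₀, map_ofNat, Complex.conj_I,
    Complex.conj_conj, map_sub] at e2
  constructor
  · linear_combination e1 + 2 * g0 t * hj + (-Complex.I * g0 t * (starRingEnd ℂ) (g0 t)) * hl +
      (n t s * ((starRingEnd ℂ) (g0 t) * g1 t - g0 t * (starRingEnd ℂ) (g1 t)) -
        (1 / 2 : ℂ) * g0 t ^ 2 * (starRingEnd ℂ) (g0 t) * m t s) * Complex.I_sq
  · linear_combination e2 + ((1 / 2 : ℂ) * ((starRingEnd ℂ) (g0 t) * g0 t *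
      (starRingEnd ℂ) (g0 t) - 2 * Complex.I * (starRingEnd ℂ) (g1 t))) * hl +
      (-(1 / 2 : ℂ) * g0 t * (starRingEnd ℂ) (g1 t) * m t s) * Complex.I_sq
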